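/- Let q be a prime power, K = F_{q²}, and let a ∈ K be a nonzero element with a^q = a (i.e., a lies in the subfield F_q of K and a ≠ 0). The number of solutions (x₁,…,x_n) ∈ K^n of the diagonal equation x₁^{q+1} + x₂^{q+1} + ⋯ + x_n^{q+1} = a equals q^{n−1}(q^n + 1) if n is odd, and equals q^{n−1}(q^n − 1) if n is even. -/

import Mathlib

open scoped BigOperators
open Finset

namespace DiagAux

variable {K : Type*} [Field K] [Fintype K] [DecidableEq K] {q : ℕ}

/-- the counting function -/
def cnt (q : ℕ) (K : Type*) [Field K] [Fintype K] [DecidableEq K] (n : ℕ) (a : K) : ℕ :=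
  (univ.filter fun x : Fin n → K => ∑ i, x i ^ (q + 1) = a).card

lemma sq_sub_one (hq2 : 2 ≤ q) : (q - 1) * (q + 1) = q ^ 2 - 1 := by
  zify [show 1 ≤ q by omega, show 1 ≤ q ^ 2 by nlinarith]
  ring

lemma key_pow (hK : Fintype.card K = q ^ 2) (y : K) : (y ^ (q + 1)) ^ q = y ^ (q + 1) := by
  have h : y ^ q ^ 2 = y := by rw [← hK]; exact FiniteField.pow_card y
  calc (y ^ (q + 1)) ^ q = y ^ q ^ 2 * y ^ q := by ring
    _ = y ^ (q + 1) := by rw [h]; ring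

lemma pow_sub_one_eq_one (hq2 : 2 ≤ q) {b : K} (hb : b ≠ 0) (hbq : b ^ q = b) :
    b ^ (q - 1) = 1 := by
  have h1 : b ^ (q - 1) * b = 1 * b := by
    rw [one_mul, ← pow_succ]
    rw [show q - 1 + 1 = q by omega, hbq]
  exact mul_right_cancel₀ hb h1

lemma exists_primitiveRoot (hq2 : 2 ≤ q) (hK : Fintype.card K = q ^ 2) :
    ∃ ζ : K, IsPrimitiveRoot ζ (q + 1) := by
  obtain ⟨g, hg⟩ := IsCyclic.exists_generator (α := Kˣ)
  have hord : orderOf g = q ^ 2 - 1 := by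
    rw [orderOf_eq_card_of_forall_mem_zpowers hg, Nat.card_eq_fintype_card,
      Fintype.card_units, hK]
  refine ⟨((g ^ (q - 1) : Kˣ) : K), IsPrimitiveRoot.coe_units_iff.mpr ?_⟩
  have hdvd : (q - 1) ∣ (q ^ 2 - 1) := ⟨q + 1, (sq_sub_one hq2).symm⟩
  have : orderOf (g ^ (q - 1)) = q + 1 := by
    rw [orderOf_pow, hord, Nat.gcd_eq_right hdvd, ← sq_sub_one hq2,
      Nat.mul_div_cancel_left _ (by omega : 0 < q - 1)]
  rw [← this]
  exact IsPrimitiveRoot.orderOf _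

lemma exists_sol (hq2 : 2 ≤ q) (hK : Fintype.card K = q ^ 2) {b : K} (hb : b ≠ 0)
    (hbq : b ^ q = b) : ∃ α : K, α ^ (q + 1) = b := by
  obtain ⟨g, hg⟩ := IsCyclic.exists_generator (α := Kˣ)
  have hord : orderOf g = q ^ 2 - 1 := by
    rw [orderOf_eq_card_of_forall_mem_zpowers hg, Nat.card_eq_fintype_card,
      Fintype.card_units, hK]
  obtain ⟨m, hm⟩ := Subgroup.mem_zpowers_iff.mp (hg (Units.mk0 b hb))
  have hb1 : (g ^ m) ^ (q - 1 : ℕ) = 1 := by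
    rw [hm]
    ext
    push_cast
    exact pow_sub_one_eq_one hq2 hb hbq
  have hdvd : ((q ^ 2 - 1 : ℕ) : ℤ) ∣ m * ((q - 1 : ℕ) : ℤ) := by
    rw [← hord]
    refine orderOf_dvd_iff_zpow_eq_one.mpr ?_
    rw [zpow_mul, zpow_natCast]
    exact hb1
  have hdvd2 : ((q : ℤ) + 1) * ((q : ℤ) - 1) ∣ m * ((q : ℤ) - 1) := by
    have hc : ((q ^ 2 - 1 : ℕ) : ℤ) = ((q : ℤ) + 1) * ((q : ℤ) - 1) := by
      push_cast [Nat.cast_sub (by nlinarith : 1 ≤ q ^ 2)]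
      ring
    have hc2 : ((q - 1 : ℕ) : ℤ) = (q : ℤ) - 1 := by
      push_cast [Nat.cast_sub (by omega : 1 ≤ q)]
      ring
    rwa [hc, hc2] at hdvd
  have hdvd3 : ((q : ℤ) + 1) ∣ m :=
    (mul_dvd_mul_iff_right (by exact_mod_cast (by omega : ((q:ℤ) - 1) ≠ 0) : ((q:ℤ) - 1) ≠ 0)).mp hdvd2
  obtain ⟨t, ht⟩ := hdvd3
  refine ⟨((g ^ t : Kˣ) : K), ?_⟩
  have : (g ^ t) ^ (q + 1) = Units.mk0 b hb := by
    rw [← hm, ht, ← zpow_natCast (g ^ t), ← zpow_mul]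
    congr 1
    push_cast
    ring
  calc ((g ^ t : Kˣ) : K) ^ (q + 1) = (((g ^ t) ^ (q + 1) : Kˣ) : K) := by push_cast; ring
    _ = b := by rw [this]; rfl


lemma fiber_zero : (univ.filter fun y : K => y ^ (q + 1) = (0 : K)) = {0} := by
  ext y
  simp [pow_eq_zero_iff (Nat.succ_ne_zero q)]

lemma fiber_card (hq2 : 2 ≤ q) (hK : Fintype.card K = q ^ 2) {b : K} (hb : b ≠ 0)
    (hbq : b ^ q = b) :
    (univ.filter fun y : K => y ^ (q + 1) = b).card = q + 1 := by
  obtain ⟨ζ, hζ⟩ := exists_primitiveRoot hq2 hK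
  obtain ⟨α, hα⟩ := exists_sol hq2 hK hb hbq
  have hαne : α ≠ 0 := by
    intro h
    rw [h, zero_pow (Nat.succ_ne_zero q)] at hα
    exact hb hα.symm
  haveI : NeZero (q + 1) := ⟨Nat.succ_ne_zero q⟩
  have himg : (univ.filter fun y : K => y ^ (q + 1) = b)
      = (range (q + 1)).image (fun i => ζ ^ i * α) := by
    ext y
    simp only [mem_filter, mem_univ, true_and, mem_image, mem_range]
    constructor
    · intro hy
      have h1 : (y * α⁻¹) ^ (q + 1) = 1 := by
        rw [mul_pow, hy, inv_pow, hα, mul_inv_cancel₀ hb]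
      obtain ⟨i, hik, hie⟩ := hζ.eq_pow_of_pow_eq_one h1
      refine ⟨i, hik, ?_⟩
      rw [hie]
      field_simp
    · rintro ⟨i, hi, rfl⟩
      rw [mul_pow, ← pow_mul, mul_comm i, pow_mul, hζ.pow_eq_one, one_pow, one_mul, hα]
  rw [himg, card_image_of_injOn, card_range]
  intro i hi j hj hij
  exact hζ.pow_inj (mem_range.mp hi) (mem_range.mp hj) (mul_right_cancel₀ hαne hij)

lemma image_norm (hq2 : 2 ≤ q) (hK : Fintype.card K = q ^ 2) :
    (univ : Finset K).image (fun y => y ^ (q + 1)) = univ.filter fun b : K => b ^ q = b := by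
  ext b
  simp only [mem_image, mem_univ, true_and, mem_filter]
  constructor
  · rintro ⟨y, rfl⟩
    exact key_pow hK y
  · intro hb
    by_cases h0 : b = 0
    · exact ⟨0, by rw [h0, zero_pow (Nat.succ_ne_zero q)]⟩
    · exact exists_sol hq2 hK h0 hb

lemma S_card (hq2 : 2 ≤ q) (hK : Fintype.card K = q ^ 2) :
    (univ.filter fun b : K => b ^ q = b).card = q := by
  set S := univ.filter fun b : K => b ^ q = b with hS
  have h0S : (0 : K) ∈ S := by
    simp only [hS, mem_filter, mem_univ, true_and]
    exact zero_pow (by omega)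
  have hcard : q ^ 2 = ∑ b ∈ S, (univ.filter fun y : K => y ^ (q + 1) = b).card := by
    rw [hS, ← hK, ← card_univ, ← image_norm hq2 hK]
    exact card_eq_sum_card_image _ _
  rw [← insert_erase h0S, sum_insert (notMem_erase _ _), fiber_zero, card_singleton] at hcard
  have hrest : ∑ b ∈ S.erase 0, (univ.filter fun y : K => y ^ (q + 1) = b).card
      = (S.erase 0).card * (q + 1) := by
    refine sum_const_nat fun b hb => ?_
    obtain ⟨hb0, hbS⟩ := mem_erase.mp hb
    exact fiber_card hq2 hK hb0 (mem_filter.mp hbS).2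
  rw [hrest] at hcard
  have hcount : (S.erase 0).card = q - 1 := by
    have h1 : (S.erase 0).card * (q + 1) = (q - 1) * (q + 1) := by
      rw [sq_sub_one hq2]; omega
    exact Nat.eq_of_mul_eq_mul_right (by omega) h1
  have := Finset.card_erase_add_one h0S
  omega


lemma cnt_indep (hq2 : 2 ≤ q) (hK : Fintype.card K = q ^ 2) (n : ℕ) {c c' : K}
    (hc : c ≠ 0) (hcq : c ^ q = c) (hc' : c' ≠ 0) (hcq' : c' ^ q = c') :
    cnt q K n c = cnt q K n c' := by
  have hr : c' * c⁻¹ ≠ 0 := by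
    simp [hc, hc']
  have hrq : (c' * c⁻¹) ^ q = c' * c⁻¹ := by
    rw [mul_pow, inv_pow, hcq, hcq']
  obtain ⟨d, hd⟩ := exists_sol hq2 hK hr hrq
  have hdne : d ≠ 0 := by
    intro h
    rw [h, zero_pow (Nat.succ_ne_zero q)] at hd
    exact hr hd.symm
  unfold cnt
  refine Finset.card_bij' (fun x _ => fun i => d * x i) (fun x _ => fun i => d⁻¹ * x i)
    ?_ ?_ ?_ ?_
  · intro x hx
    simp only [mem_filter, mem_univ, true_and] at hx ⊢
    have : ∑ i, (d * x i) ^ (q + 1) = d ^ (q + 1) * ∑ i, x i ^ (q + 1) := by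
      rw [mul_sum]
      exact Finset.sum_congr rfl fun i _ => by ring
    rw [this, hx, hd]
    field_simp
  · intro x hx
    simp only [mem_filter, mem_univ, true_and] at hx ⊢
    have : ∑ i, (d⁻¹ * x i) ^ (q + 1) = (d ^ (q + 1))⁻¹ * ∑ i, x i ^ (q + 1) := by
      rw [mul_sum]
      exact Finset.sum_congr rfl fun i _ => by rw [mul_pow, inv_pow]
    rw [this, hx, hd]
    field_simp
  · intro x _
    funext i
    field_simp
  · intro x _
    funext i
    field_simp

lemma cnt_zero_len (c : K) : cnt q K 0 c = if c = 0 then 1 else 0 := by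
  unfold cnt
  rcases eq_or_ne c 0 with rfl | hc
  · rw [if_pos rfl, filter_true_of_mem, card_univ]
    · simp
    · intro x _
      simp
  · rw [if_neg hc, card_eq_zero, filter_eq_empty_iff]
    intro x _
    simpa using hc.symm

lemma cnt_succ (n : ℕ) (c : K) :
    cnt q K (n + 1) c = ∑ y : K, cnt q K n (c - y ^ (q + 1)) := by
  have h1 : ∀ a : K, cnt q K n a = Fintype.card {x : Fin n → K // ∑ i, x i ^ (q + 1) = a} :=
    fun a => (Fintype.card_subtype _).symm
  have h2 : cnt q K (n + 1) c
      = Fintype.card {x : Fin (n + 1) → K // ∑ i, x i ^ (q + 1) = c} :=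
    (Fintype.card_subtype _).symm
  rw [h2]
  have E : {x : Fin (n + 1) → K // ∑ i, x i ^ (q + 1) = c}
      ≃ Σ y : K, {x : Fin n → K // ∑ i, x i ^ (q + 1) = c - y ^ (q + 1)} := by
    refine (Equiv.subtypeEquiv (Fin.consEquiv (fun _ : Fin (n + 1) => K)).symm ?_).trans
      ((Equiv.subtypeProdEquivSigmaSubtype
        (fun (y : K) (x : Fin n → K) => ∑ i, x i ^ (q + 1) = c - y ^ (q + 1))).trans
        (Equiv.sigmaCongrRight fun y => Equiv.refl _))
    intro x
    rw [Fin.sum_univ_succ]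
    simp only [Fin.consEquiv_symm_apply, Fin.tail]
    constructor
    · intro h
      exact eq_sub_of_add_eq' h
    · intro h
      rw [h]
      ring
  rw [Fintype.card_congr E, Fintype.card_sigma]
  exact Finset.sum_congr rfl fun y _ => (h1 _).symm

lemma cnt_succ' (hq2 : 2 ≤ q) (hK : Fintype.card K = q ^ 2) (n : ℕ) (c : K) :
    cnt q K (n + 1) c = ∑ b ∈ univ.filter (fun b : K => b ^ q = b),
      (univ.filter fun y : K => y ^ (q + 1) = b).card * cnt q K n (c - b) := by
  rw [cnt_succ n c,
    ← Finset.sum_fiberwise_of_maps_to' (t := univ.filter (fun b : K => b ^ q = b))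
      (g := fun y : K => y ^ (q + 1))
      (fun y _ => by
        simp only [mem_filter, mem_univ, true_and]
        exact key_pow hK y)
      (fun b => cnt q K n (c - b))]
  exact Finset.sum_congr rfl fun b _ => by rw [Finset.sum_const, smul_eq_mul]


lemma rec_a (hq2 : 2 ≤ q) (hK : Fintype.card K = q ^ 2)
    (hsub : ∀ x y : K, x ^ q = x → y ^ q = y → (x - y) ^ q = x - y)
    {a : K} (ha : a ≠ 0) (haq : a ^ q = a) (n : ℕ) :
    cnt q K (n + 1) a
      = cnt q K n a + (q + 1) * cnt q K n 0 + (q - 2) * ((q + 1) * cnt q K n a) := by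
  rw [cnt_succ' hq2 hK n a]
  set S := univ.filter fun b : K => b ^ q = b with hS
  have h0S : (0 : K) ∈ S := by
    simp only [hS, mem_filter, mem_univ, true_and]
    exact zero_pow (by omega)
  have haS : a ∈ S.erase 0 := by
    simp only [hS, mem_erase, mem_filter, mem_univ, true_and]
    exact ⟨ha, haq⟩
  rw [← insert_erase h0S, sum_insert (notMem_erase _ _), fiber_zero, card_singleton,
    ← insert_erase haS, sum_insert (notMem_erase _ _), sub_zero, one_mul, sub_self,
    fiber_card hq2 hK ha haq]
  have hrest : ∑ b ∈ (S.erase 0).erase a,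
      (univ.filter fun y : K => y ^ (q + 1) = b).card * cnt q K n (a - b)
      = ((S.erase 0).erase a).card * ((q + 1) * cnt q K n a) := by
    refine sum_const_nat fun b hb => ?_
    have hba : b ≠ a := (mem_erase.mp hb).1
    have hb0 : b ≠ 0 := (mem_erase.mp (mem_erase.mp hb).2).1
    have hbq : b ^ q = b := by
      have := (mem_erase.mp (mem_erase.mp hb).2).2
      rw [hS, mem_filter] at this
      exact this.2
    have hab0 : a - b ≠ 0 := sub_ne_zero.mpr (Ne.symm hba)
    have habq : (a - b) ^ q = a - b := hsub a b haq hbq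
    rw [fiber_card hq2 hK hb0 hbq, cnt_indep hq2 hK n hab0 habq ha haq]
  rw [hrest]
  have hcard2 : ((S.erase 0).erase a).card = q - 2 := by
    rw [card_erase_of_mem haS, card_erase_of_mem h0S]
    rw [hS, S_card hq2 hK]
    omega
  rw [hcard2]
  ring

lemma rec_0 (hq2 : 2 ≤ q) (hK : Fintype.card K = q ^ 2)
    (hsub : ∀ x y : K, x ^ q = x → y ^ q = y → (x - y) ^ q = x - y)
    {a : K} (ha : a ≠ 0) (haq : a ^ q = a) (n : ℕ) :
    cnt q K (n + 1) 0 = cnt q K n 0 + (q - 1) * ((q + 1) * cnt q K n a) := by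
  rw [cnt_succ' hq2 hK n 0]
  set S := univ.filter fun b : K => b ^ q = b with hS
  have h0S : (0 : K) ∈ S := by
    simp only [hS, mem_filter, mem_univ, true_and]
    exact zero_pow (by omega)
  rw [← insert_erase h0S, sum_insert (notMem_erase _ _), fiber_zero, card_singleton,
    sub_zero, one_mul]
  have hrest : ∑ b ∈ S.erase 0,
      (univ.filter fun y : K => y ^ (q + 1) = b).card * cnt q K n (0 - b)
      = (S.erase 0).card * ((q + 1) * cnt q K n a) := by
    refine sum_const_nat fun b hb => ?_
    have hb0 : b ≠ 0 := (mem_erase.mp hb).1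
    have hbq : b ^ q = b := by
      have := (mem_erase.mp hb).2
      rw [hS, mem_filter] at this
      exact this.2
    have hab0 : (0 : K) - b ≠ 0 := by
      rw [zero_sub, neg_ne_zero]
      exact hb0
    have habq : ((0 : K) - b) ^ q = (0 : K) - b :=
      hsub 0 b (zero_pow (by omega)) hbq
    rw [fiber_card hq2 hK hb0 hbq, cnt_indep hq2 hK n hab0 habq ha haq]
  rw [hrest, card_erase_of_mem h0S, hS, S_card hq2 hK]

lemma cnt_one_a (hq2 : 2 ≤ q) (hK : Fintype.card K = q ^ 2) {a : K} (ha : a ≠ 0)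
    (haq : a ^ q = a) : cnt q K 1 a = q + 1 := by
  rw [show (1 : ℕ) = 0 + 1 from rfl, cnt_succ 0 a]
  have h : ∀ y : K, cnt q K 0 (a - y ^ (q + 1)) = if y ^ (q + 1) = a then 1 else 0 := by
    intro y
    rw [cnt_zero_len]
    simp only [sub_eq_zero]
    simp only [eq_comm]
  simp_rw [h]
  rw [← Finset.card_filter, fiber_card hq2 hK ha haq]


lemma cnt_one_0 (hq2 : 2 ≤ q) (hK : Fintype.card K = q ^ 2) : cnt q K 1 0 = 1 := by
  rw [show (1 : ℕ) = 0 + 1 from rfl, cnt_succ 0 0]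
  have h : ∀ y : K, cnt q K 0 (0 - y ^ (q + 1)) = if y ^ (q + 1) = 0 then 1 else 0 := by
    intro y
    rw [cnt_zero_len]
    simp only [zero_sub, neg_eq_zero]
  simp_rw [h]
  rw [← Finset.card_filter, fiber_zero, card_singleton]

lemma frob_sub (hq : IsPrimePow q) (hK : Fintype.card K = q ^ 2) :
    ∀ x y : K, x ^ q = x → y ^ q = y → (x - y) ^ q = x - y := by
  obtain ⟨p, k, hp, hk, hpk⟩ := hq
  have hp' : p.Prime := Nat.prime_iff.mpr hp
  haveI : Fact p.Prime := ⟨hp'⟩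
  have hchar : CharP K p := by
    have hr : CharP K (ringChar K) := ringChar.charP K
    have hrp : (ringChar K).Prime := CharP.char_is_prime K (ringChar K)
    obtain ⟨m, _, hcard⟩ := FiniteField.card K (ringChar K)
    have hdvd : p ∣ (ringChar K) ^ (m : ℕ) := by
      rw [← hcard, hK, ← hpk, ← pow_mul]
      exact dvd_pow_self p (by omega)
    have : p = ringChar K :=
      (Nat.prime_dvd_prime_iff_eq hp' hrp).mp (hp'.dvd_of_dvd_pow hdvd)
    rwa [this]
  haveI := hchar
  haveI : ExpChar K p := ExpChar.prime hp'
  intro x y hx hy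
  have h := sub_pow_expChar_pow (p := p) x y (n := k)
  rw [hpk] at h
  rw [h, hx, hy]

lemma main_formula (hq2 : 2 ≤ q) (hK : Fintype.card K = q ^ 2)
    (hsub : ∀ x y : K, x ^ q = x → y ^ q = y → (x - y) ^ q = x - y)
    {a : K} (ha : a ≠ 0) (haq : a ^ q = a) : ∀ m : ℕ,
    (cnt q K (m + 1) a : ℤ) = (q : ℤ) ^ m * ((q : ℤ) ^ (m + 1) - (-1) ^ (m + 1)) ∧
    (cnt q K (m + 1) 0 : ℤ) = (q : ℤ) ^ m * ((q : ℤ) ^ (m + 1) + (-1) ^ (m + 1) * ((q : ℤ) - 1)) := by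
  intro m
  induction m with
  | zero =>
    rw [cnt_one_a hq2 hK ha haq, cnt_one_0 hq2 hK]
    constructor <;> push_cast <;> ring
  | succ m ih =>
    have hc2 : ((q - 2 : ℕ) : ℤ) = (q : ℤ) - 2 := by omega
    have hc1 : ((q - 1 : ℕ) : ℤ) = (q : ℤ) - 1 := by omega
    constructor
    · rw [rec_a hq2 hK hsub ha haq (m + 1)]
      push_cast [hc2]
      rw [ih.1, ih.2, pow_succ (-1 : ℤ) (m + 1)]
      ring
    · rw [rec_0 hq2 hK hsub ha haq (m + 1)]
      push_cast [hc1]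
      rw [ih.1, ih.2, pow_succ (-1 : ℤ) (m + 1)]
      ring

end DiagAux

/-- In the finite field `K = F_{q²}`, for a nonzero element `a` of the
subfield `F_q` (i.e. `a ≠ 0` and `a^q = a`), the number of solutions of the diagonal
equation `x₁^{q+1} + ⋯ + x_n^{q+1} = a` is `q^{n-1}(q^n + 1)` if `n` is odd and
`q^{n-1}(q^n - 1)` if `n` is even. -/
theorem card_diagonal_eq_nonzero
    (q : ℕ) (hq : IsPrimePow q)
    {K : Type*} [Field K] [Fintype K] (hK : Fintype.card K = q ^ 2)
    (a : K) (ha : a ≠ 0) (haq : a ^ q = a)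
    (n : ℕ) (hn : 0 < n) :
    (Nat.card {x : Fin n → K // ∑ i, x i ^ (q + 1) = a} : ℤ) =
      if Odd n then (q : ℤ) ^ (n - 1) * ((q : ℤ) ^ n + 1)
      else (q : ℤ) ^ (n - 1) * ((q : ℤ) ^ n - 1) := by
  classical
  have hq2 : 2 ≤ q := hq.two_le
  obtain ⟨m, rfl⟩ : ∃ m, n = m + 1 := ⟨n - 1, by omega⟩
  have hNat : Nat.card {x : Fin (m + 1) → K // ∑ i, x i ^ (q + 1) = a}
      = DiagAux.cnt q K (m + 1) a := by
    rw [Nat.card_eq_fintype_card, Fintype.card_subtype]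
    unfold DiagAux.cnt
    congr!
  obtain ⟨hA, -⟩ := DiagAux.main_formula hq2 hK (DiagAux.frob_sub hq hK) ha haq m
  rw [hNat, hA]
  by_cases ho : Odd (m + 1)
  · rw [if_pos ho, ho.neg_one_pow]
    simp only [Nat.add_sub_cancel]
    ring
  · rw [if_neg ho, (Nat.not_odd_iff_even.mp ho).neg_one_pow]
    simp only [Nat.add_sub_cancel]
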